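/- Let f : X → Y be a continuous open map of topological spaces and let L ⊆ X be a locally closed subset satisfying f⁻¹(f(L)) = L. Then f(L) is a locally closed subset of Y. -/

import Mathlib

/-- If `f : X → Y` is a continuous open map and `L ⊆ X` is a locally closed subset with
`f ⁻¹ (f(L)) = L`, then `f(L)` is locally closed in `Y`. -/
theorem image_locallyClosed_of_saturated {X Y : Type*} [TopologicalSpace X]
    [TopologicalSpace Y] (f : X → Y) (hcont : Continuous f) (hopen : IsOpenMap f)
    (L : Set X) (hL : IsLocallyClosed L) (hsat : f ⁻¹' (f '' L) = L) :
    IsLocallyClosed (f '' L) := by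
  obtain ⟨U, Z, hU, hZ, rfl⟩ := hL
  set L := U ∩ Z with hLdef
  -- L = U ∩ closure L
  have hLcl : L = U ∩ closure L := by
    apply subset_antisymm
    · exact fun x hx => ⟨hx.1, subset_closure hx⟩
    · intro x hx
      exact ⟨hx.1, (closure_minimal Set.inter_subset_right hZ) hx.2⟩
  refine ⟨f '' U, closure (f '' L), hopen U hU, isClosed_closure, ?_⟩
  apply subset_antisymm
  · exact Set.subset_inter (Set.image_mono (f := f) Set.inter_subset_left) subset_closure
  · rintro y ⟨⟨u, hu, rfl⟩, hycl⟩
    -- show u ∈ closure L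
    have hucl : u ∈ closure L := by
      rw [mem_closure_iff]
      intro V hV huV
      have : f u ∈ f '' (V ∩ U) := ⟨u, ⟨huV, hu⟩, rfl⟩
      obtain ⟨z, hz, hzL⟩ := mem_closure_iff.mp hycl _ (hopen _ (hV.inter hU)) this
      obtain ⟨x, hxVU, rfl⟩ := hz
      have : x ∈ L := by rw [← hsat]; exact hzL
      exact ⟨x, hxVU.1, this⟩
    have : u ∈ L := hLcl ▸ ⟨hu, hucl⟩
    exact ⟨u, this, rfl⟩
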